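/- arXiv:1104.2289 — 5 statements merged into one kernel-verified Lean document; each statement's English description precedes it below -/
import Mathlib

section
/- An S₁×⋯×S_N-setting correlation scenario admits an LqHV (local quasi hidden variable) model if and only if there exists a finite signed measure μ on the product measurable space Λ₁^{S₁}×⋯×Λ_N^{S_N}, with total mass μ(Λ₁^{S₁}×⋯×Λ_N^{S_N}) = 1, that returns all joint probability distributions P_{(s₁,…,s_N)} of the scenario as the corresponding marginals. -/
open MeasureTheory ProbabilityTheory

namespace LqHV

/-- Integration of a function with respect to a signed measure, via the Jordan
decomposition. -/
noncomputable def signedIntegral {Ω : Type} [MeasurableSpace Ω] (ν : SignedMeasure Ω)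
    (f : Ω → ℝ) : ℝ :=
  (∫ ω, f ω ∂ν.toJordanDecomposition.posPart) - ∫ ω, f ω ∂ν.toJordanDecomposition.negPart

/-- An `S₁ × ⋯ × S_N`-setting correlation scenario, given by its family of joint probability
distributions `P`, admits an LqHV (local quasi hidden variable) model: there are a measurable
space `Ω`, a finite signed measure `ν` on `Ω` with `ν(Ω) = 1`, and Markov kernels
`κ n s : Ω → Λ n` such that every joint distribution factorizes on measurable rectangles as
`P s (F₁ × ⋯ × F_N) = ∫ ∏ n, κ n (s n) ω (F n) dν(ω)`. -/
def AdmitsLqHV {N : ℕ} {S : Fin N → ℕ} {Λ : Fin N → Type} [∀ n, MeasurableSpace (Λ n)]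
    (P : (∀ n, Fin (S n)) → Measure (∀ n, Λ n)) : Prop :=
  ∃ (Ω : Type) (_ : MeasurableSpace Ω) (ν : SignedMeasure Ω)
    (κ : ∀ n, Fin (S n) → Kernel Ω (Λ n)),
    ν Set.univ = 1 ∧ (∀ n s, IsMarkovKernel (κ n s)) ∧
    ∀ (s : ∀ n, Fin (S n)) (F : ∀ n, Set (Λ n)), (∀ n, MeasurableSet (F n)) →
      (P s (Set.univ.pi F)).toReal =
        signedIntegral ν fun ω => ∏ n, (κ n (s n) ω (F n)).toReal

end LqHV

namespace LqHVAux

open LqHV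

/-- A signed measure evaluated via its Jordan decomposition. -/
theorem signed_apply_jordan {Ω : Type} [MeasurableSpace Ω] (ν : SignedMeasure Ω)
    {A : Set Ω} (hA : MeasurableSet A) :
    ν A = (ν.toJordanDecomposition.posPart A).toReal
        - (ν.toJordanDecomposition.negPart A).toReal := by
  conv_lhs => rw [← ν.toSignedMeasure_toJordanDecomposition]
  rw [JordanDecomposition.toSignedMeasure, VectorMeasure.sub_apply,
    Measure.toSignedMeasure_apply_measurable hA, Measure.toSignedMeasure_apply_measurable hA]
  rfl

theorem signedIntegral_indicator {Ω : Type} [MeasurableSpace Ω] (ν : SignedMeasure Ω)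
    {A : Set Ω} (hA : MeasurableSet A) :
    LqHV.signedIntegral ν (A.indicator 1) = ν A := by
  rw [LqHV.signedIntegral, integral_indicator_one hA, integral_indicator_one hA,
    signed_apply_jordan ν hA]
  rfl

theorem signed_ext {α : Type} [m : MeasurableSpace α] {C : Set (Set α)}
    (hgen : m = MeasurableSpace.generateFrom C) (hpi : IsPiSystem C)
    (μ ν : SignedMeasure α) (huniv : μ Set.univ = ν Set.univ)
    (h : ∀ A ∈ C, μ A = ν A) : μ = ν := by
  ext A hA
  refine MeasurableSpace.induction_on_inter (C := fun A _ => μ A = ν A) hgen hpi (by simp) h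
    ?_ ?_ A hA
  · intro t ht iht
    have h1 : μ (t ∪ tᶜ) = μ t + μ tᶜ :=
      μ.of_union disjoint_compl_right ht ht.compl
    have h2 : ν (t ∪ tᶜ) = ν t + ν tᶜ :=
      ν.of_union disjoint_compl_right ht ht.compl
    rw [Set.union_compl_self] at h1 h2
    rw [huniv, h2] at h1
    linarith
  · intro f hd hf ihf
    rw [μ.of_disjoint_iUnion hf hd, ν.of_disjoint_iUnion hf hd]
    exact tsum_congr ihf

/-- Measurability of a parametrized finite product of probability measures. -/
theorem measurable_measure_pi {ι : Type} [Fintype ι] {Ω : Type} [MeasurableSpace Ω]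
    {α : ι → Type} [∀ i, MeasurableSpace (α i)] (κ : ∀ i, Ω → Measure (α i))
    (hκ : ∀ i, Measurable (κ i)) (hprob : ∀ i ω, IsProbabilityMeasure (κ i ω)) :
    Measurable fun ω => Measure.pi fun i => κ i ω := by
  haveI : ∀ i ω, IsProbabilityMeasure (κ i ω) := hprob
  rw [Measure.measurable_measure]
  intro A hA
  refine MeasurableSpace.induction_on_inter
    (C := fun A _ => Measurable fun ω => Measure.pi (fun i => κ i ω) A)
    generateFrom_pi.symm isPiSystem_pi (by simp) ?_ ?_ ?_ A hA
  · rintro t ⟨F, hF, rfl⟩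
    simp only [Measure.pi_pi]
    exact Finset.measurable_prod _ fun i _ =>
      (Measure.measurable_coe (hF i (Set.mem_univ i))).comp (hκ i)
  · intro t ht iht
    have : ∀ ω, Measure.pi (fun i => κ i ω) tᶜ = 1 - Measure.pi (fun i => κ i ω) t := by
      intro ω
      rw [measure_compl ht (measure_ne_top _ _), measure_univ]
    simp only [this]
    exact Measurable.sub measurable_const iht
  · intro f hd hf ihf
    have : ∀ ω, Measure.pi (fun i => κ i ω) (⋃ i, f i)
        = ∑' i, Measure.pi (fun i' => κ i' ω) (f i) := fun ω => measure_iUnion hd hf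
    simp only [this]
    exact Measurable.ennreal_tsum ihf

end LqHVAux


open LqHV in
/-- **Theorem 1 (LqHV modelling criterion).** An `S₁ × ⋯ × S_N`-setting correlation scenario
admits an LqHV model if and only if there exists a normalized finite signed measure `μ` on the
product space `Λ₁^{S₁} × ⋯ × Λ_N^{S_N}` returning all joint probability distributions
`P_{(s₁,…,s_N)}` of the scenario as the corresponding marginals. -/
theorem lqhv_model_iff_normalized_signed_measure
    {N : ℕ} (hN : 2 ≤ N) {S : Fin N → ℕ} (hS : ∀ n, 1 ≤ S n)
    {Λ : Fin N → Type} [∀ n, MeasurableSpace (Λ n)]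
    (P : (∀ n, Fin (S n)) → Measure (∀ n, Λ n)) [∀ s, IsProbabilityMeasure (P s)] :
    AdmitsLqHV P ↔
      ∃ μ : SignedMeasure (∀ n, Fin (S n) → Λ n),
        μ Set.univ = 1 ∧
        ∀ s : ∀ n, Fin (S n),
          μ.map (fun ω n => ω n (s n)) = (P s).toSignedMeasure := by
  classical
  constructor
  · rintro ⟨Ω, mΩ, ν, κ, hν1, hmk, hfac⟩
    haveI : ∀ n s, IsMarkovKernel (κ n s) := hmk
    set νp := ν.toJordanDecomposition.posPart with hνp
    set νn := ν.toJordanDecomposition.negPart with hνn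
    have hinner : ∀ n, Measurable fun ω => Measure.pi fun t : Fin (S n) => κ n t ω :=
      fun n => LqHVAux.measurable_measure_pi _ (fun t => (κ n t).measurable) (fun t ω => inferInstance)
    set Q : Ω → Measure (∀ n, Fin (S n) → Λ n) :=
      fun ω => Measure.pi fun n => Measure.pi fun t => κ n t ω with hQdef
    have hQmeas : Measurable Q :=
      LqHVAux.measurable_measure_pi _ hinner (fun n ω => inferInstance)
    have hQprob : ∀ ω, IsProbabilityMeasure (Q ω) := fun ω => inferInstance
    set mp := νp.bind Q with hmpdef
    set mn := νn.bind Q with hmndef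
    have hmp : ∀ {A : Set (∀ n, Fin (S n) → Λ n)}, MeasurableSet A →
        mp A = ∫⁻ ω, Q ω A ∂νp := fun hA => Measure.bind_apply hA hQmeas.aemeasurable
    have hmn : ∀ {A : Set (∀ n, Fin (S n) → Λ n)}, MeasurableSet A →
        mn A = ∫⁻ ω, Q ω A ∂νn := fun hA => Measure.bind_apply hA hQmeas.aemeasurable
    haveI : IsFiniteMeasure mp := by
      constructor
      rw [hmp MeasurableSet.univ]
      simp only [measure_univ, lintegral_one]
      exact measure_lt_top νp _
    haveI : IsFiniteMeasure mn := by
      constructor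
      rw [hmn MeasurableSet.univ]
      simp only [measure_univ, lintegral_one]
      exact measure_lt_top νn _
    set μ : SignedMeasure (∀ n, Fin (S n) → Λ n) :=
      mp.toSignedMeasure - mn.toSignedMeasure with hμdef
    have hμapp : ∀ {A : Set (∀ n, Fin (S n) → Λ n)}, MeasurableSet A →
        μ A = (mp A).toReal - (mn A).toReal := by
      intro A hA
      rw [hμdef, VectorMeasure.sub_apply, Measure.toSignedMeasure_apply_measurable hA,
        Measure.toSignedMeasure_apply_measurable hA]
      rfl
    have hμuniv : μ Set.univ = 1 := by
      rw [hμapp MeasurableSet.univ, hmp MeasurableSet.univ, hmn MeasurableSet.univ]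
      simp only [measure_univ, lintegral_one]
      rw [← LqHVAux.signed_apply_jordan ν MeasurableSet.univ, hν1]
    refine ⟨μ, hμuniv, fun s => ?_⟩
    have hf : Measurable fun (ω : ∀ n, Fin (S n) → Λ n) n => ω n (s n) :=
      measurable_pi_lambda _ fun n => (measurable_pi_apply (s n)).comp (measurable_pi_apply n)
    refine LqHVAux.signed_ext generateFrom_pi.symm isPiSystem_pi _ _ ?_ ?_
    · rw [VectorMeasure.map_apply μ hf MeasurableSet.univ, Set.preimage_univ, hμuniv,
        Measure.toSignedMeasure_apply_measurable MeasurableSet.univ, probReal_univ]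
    · rintro _ ⟨F, hF, rfl⟩
      have hFm : ∀ n, MeasurableSet (F n) := fun n => hF n (Set.mem_univ n)
      have hrect : MeasurableSet (Set.univ.pi F) := MeasurableSet.univ_pi hFm
      have hpre : (fun (ω : ∀ n, Fin (S n) → Λ n) n => ω n (s n)) ⁻¹' Set.univ.pi F =
          Set.univ.pi fun n =>
            Set.univ.pi (Function.update (fun _ : Fin (S n) => (Set.univ : Set (Λ n)))
              (s n) (F n)) := by
        ext ω
        simp only [Set.mem_preimage, Set.mem_pi, Set.mem_univ, forall_true_left,
          Function.update_apply]
        constructor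
        · intro h n t
          by_cases ht : t = s n
          · subst ht; simp [h n]
          · simp [ht]
        · intro h n
          have := h n (s n)
          simpa using this
      have hpreMeas : MeasurableSet ((fun (ω : ∀ n, Fin (S n) → Λ n) n => ω n (s n)) ⁻¹'
          Set.univ.pi F) := hf hrect
      have hQrect : ∀ ω, Q ω ((fun (ω : ∀ n, Fin (S n) → Λ n) n => ω n (s n)) ⁻¹'
          Set.univ.pi F) = ∏ n, κ n (s n) ω (F n) := by
        intro ω
        rw [hpre, hQdef]
        rw [Measure.pi_pi]
        refine Finset.prod_congr rfl fun n _ => ?_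
        rw [Measure.pi_pi]
        rw [Fintype.prod_eq_single (s n) (fun t ht => by
          rw [Function.update_of_ne ht]; exact measure_univ)]
        rw [Function.update_self]
      have hgmeas : Measurable fun ω => ∏ n, κ n (s n) ω (F n) :=
        Finset.measurable_prod _ fun n _ =>
          (Measure.measurable_coe (hFm n)).comp (κ n (s n)).measurable
      have hglt : ∀ ω, (∏ n, κ n (s n) ω (F n)) < ⊤ :=
        fun ω => ENNReal.prod_lt_top fun n _ => measure_lt_top _ _
      have hint : ∀ (ρ : Measure Ω), IsFiniteMeasure ρ →
          (∫⁻ ω, Q ω ((fun (ω : ∀ n, Fin (S n) → Λ n) n => ω n (s n)) ⁻¹'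
            Set.univ.pi F) ∂ρ).toReal
          = ∫ ω, ∏ n, (κ n (s n) ω (F n)).toReal ∂ρ := by
        intro ρ hρ
        simp_rw [hQrect]
        rw [← integral_toReal hgmeas.aemeasurable (ae_of_all _ hglt)]
        simp_rw [ENNReal.toReal_prod]
      rw [VectorMeasure.map_apply μ hf hrect, hμapp hpreMeas, hmp hpreMeas, hmn hpreMeas,
        hint νp inferInstance, hint νn inferInstance,
        Measure.toSignedMeasure_apply_measurable hrect, Measure.real_def, hfac s F hFm]
      rfl
  · rintro ⟨μ, hμ1, hmarg⟩
    refine ⟨∀ n, Fin (S n) → Λ n, inferInstance, μ,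
      fun n t => Kernel.deterministic (fun ω => ω n t)
        ((measurable_pi_apply t).comp (measurable_pi_apply n)),
      hμ1, fun n t => inferInstance, ?_⟩
    intro s F hF
    have hf : Measurable fun (ω : ∀ n, Fin (S n) → Λ n) n => ω n (s n) :=
      measurable_pi_lambda _ fun n => (measurable_pi_apply (s n)).comp (measurable_pi_apply n)
    have hrect : MeasurableSet (Set.univ.pi F) := MeasurableSet.univ_pi hF
    set A := (fun (ω : ∀ n, Fin (S n) → Λ n) n => ω n (s n)) ⁻¹' Set.univ.pi F with hAdef
    have hA : MeasurableSet A := hf hrect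
    have hfun : (fun ω => ∏ n, ((Kernel.deterministic (fun ω' => ω' n (s n))
        ((measurable_pi_apply (s n)).comp (measurable_pi_apply n))) ω (F n)).toReal)
        = A.indicator 1 := by
      funext ω
      by_cases h : ∀ n, ω n (s n) ∈ F n
      · have hmem : ω ∈ A := by simp [hAdef, Set.mem_pi, h]
        rw [Set.indicator_of_mem hmem]
        simp only [Kernel.deterministic_apply' _ _ (hF _)]
        rw [Finset.prod_eq_one fun n _ => by
          rw [Set.indicator_of_mem (h n)]; simp]
        simp
      · push_neg at h
        obtain ⟨n, hn⟩ := h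
        have hnm : ω ∉ A := by
          simp only [hAdef, Set.mem_preimage, Set.mem_pi, Set.mem_univ, forall_true_left]
          push_neg
          exact ⟨n, hn⟩
        rw [Set.indicator_of_notMem hnm]
        refine Finset.prod_eq_zero (Finset.mem_univ n) ?_
        rw [Kernel.deterministic_apply' _ _ (hF n), Set.indicator_of_notMem hn]
        simp
    rw [hfun, LqHVAux.signedIntegral_indicator μ hA]
    have := hmarg s
    rw [← VectorMeasure.map_apply μ hf hrect,
      this, Measure.toSignedMeasure_apply_measurable hrect, Measure.real_def]
end

section
/- An S₁×⋯×S_N-setting correlation scenario admits an LHV (local hidden variable) model if and only if there exists a probability measure μ' on the product measurable space Λ₁^{S₁}×⋯×Λ_N^{S_N} that returns all joint probability distributions P_{(s₁,…,s_N)} of the scenario as the corresponding marginals. -/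
open MeasureTheory ProbabilityTheory

namespace LqHV

/-- An `S₁ × ⋯ × S_N`-setting correlation scenario, given by its family of joint probability
distributions `P`, admits an LHV (local hidden variable) model: there are a measurable
space `Ω`, a probability measure `ν` on `Ω`, and Markov kernels `κ n s : Ω → Λ n` such that
every joint distribution factorizes on measurable rectangles as
`P s (F₁ × ⋯ × F_N) = ∫ ∏ n, κ n (s n) ω (F n) dν(ω)`. -/
def AdmitsLHV {N : ℕ} {S : Fin N → ℕ} {Λ : Fin N → Type} [∀ n, MeasurableSpace (Λ n)]
    (P : (∀ n, Fin (S n)) → Measure (∀ n, Λ n)) : Prop :=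
  ∃ (Ω : Type) (_ : MeasurableSpace Ω) (ν : Measure Ω) (_ : IsProbabilityMeasure ν)
    (κ : ∀ n, Fin (S n) → Kernel Ω (Λ n)),
    (∀ n s, IsMarkovKernel (κ n s)) ∧
    ∀ (s : ∀ n, Fin (S n)) (F : ∀ n, Set (Λ n)), (∀ n, MeasurableSet (F n)) →
      (P s (Set.univ.pi F)).toReal =
        ∫ ω, ∏ n, (κ n (s n) ω (F n)).toReal ∂ν

end LqHV

open Set in
lemma measurable_measurePi {ι : Type} [Fintype ι] {Ω : Type} [MeasurableSpace Ω]
    {Λ : ι → Type} [∀ i, MeasurableSpace (Λ i)] (f : ∀ i, Ω → Measure (Λ i))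
    (hf : ∀ i, Measurable (f i)) (hp : ∀ i ω, IsProbabilityMeasure (f i ω)) :
    Measurable fun ω => Measure.pi (fun i => f i ω) := by
  haveI : ∀ ω i, IsProbabilityMeasure (f i ω) := fun ω i => hp i ω
  rw [Measure.measurable_measure]
  intro A hA
  refine MeasurableSpace.induction_on_inter
    (C := fun t _ => Measurable fun ω => Measure.pi (fun i => f i ω) t)
    generateFrom_pi.symm isPiSystem_pi ?_ ?_ ?_ ?_ A hA
  · simp only [measure_empty]; exact measurable_const
  · rintro t ⟨F, hF, rfl⟩
    simp_rw [Measure.pi_pi]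
    exact Finset.measurable_prod _ fun i _ =>
      (Measure.measurable_coe (hF i trivial)).comp (hf i)
  · intro t ht hC
    have : ∀ ω, Measure.pi (fun i => f i ω) tᶜ = 1 - Measure.pi (fun i => f i ω) t := by
      intro ω
      rw [measure_compl ht (measure_ne_top _ _), measure_univ]
    simp_rw [this]
    exact measurable_const.sub hC
  · intro g hdisj hmeas hC
    simp_rw [measure_iUnion hdisj hmeas]
    exact Measurable.ennreal_tsum hC

lemma pi_eval_preimage_prob {ι : Type} [Fintype ι] [DecidableEq ι]
    {Λ : ι → Type} [∀ i, MeasurableSpace (Λ i)] (μ : ∀ i, Measure (Λ i))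
    [∀ i, IsProbabilityMeasure (μ i)] (j : ι) {F : Set (Λ j)} (_hF : MeasurableSet F) :
    Measure.pi μ (Function.eval j ⁻¹' F) = μ j F := by
  rw [Set.eval_preimage, Measure.pi_pi]
  rw [Finset.prod_eq_single j (fun i _ hij => by simp [Function.update_of_ne hij])
    (by simp)]
  simp

open LqHV in
/-- **Corollary 1 (LHV modelling criterion).** An `S₁ × ⋯ × S_N`-setting correlation scenario
admits an LHV model if and only if there exists a probability measure `μ'` on the product
space `Λ₁^{S₁} × ⋯ × Λ_N^{S_N}` returning all joint probability distributions
`P_{(s₁,…,s_N)}` of the scenario as the corresponding marginals. -/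
theorem lhv_model_iff_probability_measure
    {N : ℕ} (hN : 2 ≤ N) {S : Fin N → ℕ} (hS : ∀ n, 1 ≤ S n)
    {Λ : Fin N → Type} [∀ n, MeasurableSpace (Λ n)]
    (P : (∀ n, Fin (S n)) → Measure (∀ n, Λ n)) [∀ s, IsProbabilityMeasure (P s)] :
    AdmitsLHV P ↔
      ∃ μ' : Measure (∀ n, Fin (S n) → Λ n),
        IsProbabilityMeasure μ' ∧
        ∀ s : ∀ n, Fin (S n),
          μ'.map (fun ω n => ω n (s n)) = P s := by
  constructor
  · rintro ⟨Ω, mΩ, ν, hν, κ, hκ, hP⟩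
    haveI := hν
    haveI := fun n s => hκ n s
    set m : Ω → Measure (∀ n, Fin (S n) → Λ n) :=
      fun ω => Measure.pi fun n => Measure.pi fun s => κ n s ω with hm_def
    have hm_inner : ∀ n, Measurable fun ω => Measure.pi fun s => (κ n s) ω := fun n =>
      measurable_measurePi _ (fun s => (κ n s).measurable) (fun s ω => inferInstance)
    have hm : Measurable m :=
      measurable_measurePi _ hm_inner (fun n ω => inferInstance)
    have hprob : IsProbabilityMeasure (ν.bind m) := by
      constructor
      rw [Measure.bind_apply MeasurableSet.univ hm.aemeasurable]
      simp [m]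
    refine ⟨ν.bind m, hprob, fun s => ?_⟩
    have hg : Measurable (fun ω : ∀ n, Fin (S n) → Λ n => fun n => ω n (s n)) :=
      measurable_pi_lambda _ fun n => (measurable_pi_apply (s n)).comp (measurable_pi_apply n)
    haveI : IsProbabilityMeasure ((ν.bind m).map fun ω n => ω n (s n)) :=
      Measure.isProbabilityMeasure_map hg.aemeasurable
    refine ext_of_generate_finite _ generateFrom_pi.symm isPiSystem_pi ?_ (by simp)
    rintro t ⟨F, hF, rfl⟩
    have hFm : ∀ n, MeasurableSet (F n) := fun n => hF n trivial
    rw [Measure.map_apply hg (MeasurableSet.univ_pi hFm)]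
    have hpre : (fun ω : ∀ n, Fin (S n) → Λ n => fun n => ω n (s n)) ⁻¹' Set.univ.pi F =
        Set.univ.pi fun n => (Function.eval (s n) ⁻¹' F n : Set (Fin (S n) → Λ n)) := by
      ext ω; simp [Set.mem_pi]
    have hset : MeasurableSet (Set.univ.pi fun n => (Function.eval (s n) ⁻¹' F n : Set (Fin (S n) → Λ n))) := by
      refine MeasurableSet.univ_pi fun n => ?_
      exact measurable_pi_apply (s n) (hFm n)
    rw [hpre, Measure.bind_apply hset hm.aemeasurable]
    have hval : ∀ ω, m ω (Set.univ.pi fun n => (Function.eval (s n) ⁻¹' F n : Set (Fin (S n) → Λ n))) =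
        ∏ n, κ n (s n) ω (F n) := by
      intro ω
      rw [hm_def, Measure.pi_pi]
      exact Finset.prod_congr rfl fun n _ => pi_eval_preimage_prob _ _ (hFm n)
    simp_rw [hval]
    have key := hP s F hFm
    simp_rw [← ENNReal.toReal_prod] at key
    have hmeasf : Measurable fun ω => ∏ n, κ n (s n) ω (F n) :=
      Finset.measurable_prod _ fun n _ => Kernel.measurable_coe _ (hFm n)
    have hlt : ∀ ω, (∏ n, κ n (s n) ω (F n)) < ⊤ := fun ω =>
      ENNReal.prod_lt_top fun n _ => measure_lt_top _ _
    rw [integral_toReal hmeasf.aemeasurable (Filter.Eventually.of_forall hlt)] at key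
    have h2 : (∫⁻ ω, ∏ n, κ n (s n) ω (F n) ∂ν) ≠ ⊤ := by
      refine ne_top_of_le_ne_top (by simp : (1 : ENNReal) ≠ ⊤) ?_
      calc ∫⁻ ω, ∏ n, κ n (s n) ω (F n) ∂ν ≤ ∫⁻ _, 1 ∂ν := by
            refine lintegral_mono fun ω => ?_
            exact Finset.prod_le_one (fun n _ => zero_le) (fun n _ => prob_le_one)
        _ = 1 := by simp
    exact ((ENNReal.toReal_eq_toReal_iff' (measure_ne_top _ _) h2).mp key).symm
  · rintro ⟨μ', hμ', hmarg⟩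
    haveI := hμ'
    refine ⟨∀ n, Fin (S n) → Λ n, inferInstance, μ', hμ',
      fun n sn => Kernel.deterministic (fun ω => ω n sn)
        ((measurable_pi_apply sn).comp (measurable_pi_apply n)),
      fun n sn => inferInstance, ?_⟩
    intro s F hF
    have hg : Measurable (fun ω : ∀ n, Fin (S n) → Λ n => fun n => ω n (s n)) :=
      measurable_pi_lambda _ fun n => (measurable_pi_apply (s n)).comp (measurable_pi_apply n)
    have hA : MeasurableSet
        ((fun ω : ∀ n, Fin (S n) → Λ n => fun n => ω n (s n)) ⁻¹' Set.univ.pi F) :=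
      hg (MeasurableSet.univ_pi hF)
    have step1 : ∀ ω : ∀ n, Fin (S n) → Λ n,
        (∏ n, ((Kernel.deterministic (fun ω => ω n (s n))
            ((measurable_pi_apply (s n)).comp (measurable_pi_apply n))) ω (F n)).toReal) =
          ((fun ω : ∀ n, Fin (S n) → Λ n => fun n => ω n (s n)) ⁻¹' Set.univ.pi F).indicator
            (fun _ => (1 : ℝ)) ω := by
      classical
      intro ω
      have : ∀ n, ((Kernel.deterministic (fun ω : ∀ n, Fin (S n) → Λ n => ω n (s n))
            ((measurable_pi_apply (s n)).comp (measurable_pi_apply n))) ω (F n)).toReal =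
          if ω n (s n) ∈ F n then (1 : ℝ) else 0 := by
        intro n
        rw [Kernel.deterministic_apply' _ _ (hF n)]
        simp [Set.indicator_apply]
        split_ifs <;> simp
      simp_rw [this, Fintype.prod_boole]
      simp [Set.indicator_apply, Set.mem_pi]
    rw [integral_congr_ae (Filter.Eventually.of_forall step1)]
    rw [integral_indicator_const _ hA]
    rw [show μ'.real ((fun ω : ∀ n, Fin (S n) → Λ n => fun n => ω n (s n)) ⁻¹' Set.univ.pi F) =
        (P s (Set.univ.pi F)).toReal by
      rw [measureReal_def, ← Measure.map_apply hg (MeasurableSet.univ_pi hF), hmarg s]]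
    simp
end

section
/- For every state ρ on ℂ^{d₁}⊗⋯⊗ℂ^{d_N} and all positive integers S₁,…,S_N ≥ 1, there exists an S₁×⋯×S_N-setting source operator for ρ. -/
open scoped ComplexOrder Matrix

namespace LqHV

/-- Entrywise tensor (Kronecker) product of a finite family of square complex matrices,
realized on the pi-type index. -/
def tprod {ι : Type} [Fintype ι] [DecidableEq ι] {κ : ι → Type} [∀ i, Fintype (κ i)]
    (X : ∀ i, Matrix (κ i) (κ i) ℂ) : Matrix (∀ i, κ i) (∀ i, κ i) ℂ :=
  fun a b => ∏ i, X i (a i) (b i)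

variable {N : ℕ}

/-- On the tensor product space `⊗_{n} (ℂ^{d n})^{⊗ S n}`, the operator acting as `X n` in
slot `k n` of site `n` and as the identity in all other slots. -/
def slot {d S : Fin N → ℕ} (X : ∀ n, Matrix (Fin (d n)) (Fin (d n)) ℂ) (k : ∀ n, Fin (S n)) :
    ∀ p : Σ n : Fin N, Fin (S n), Matrix (Fin (d p.1)) (Fin (d p.1)) ℂ :=
  fun p => if p.2 = k p.1 then X p.1 else 1

/-- `T` is an `S₁ × ⋯ × S_N`-setting source operator for the state `ρ` on
`ℂ^{d 1} ⊗ ⋯ ⊗ ℂ^{d N}`: a Hermitian matrix on `(ℂ^{d 1})^{⊗ S 1} ⊗ ⋯ ⊗ (ℂ^{d N})^{⊗ S N}`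
with `tr[T ((I^{⊗k₁}⊗X₁⊗I^{⊗(S₁−1−k₁)}) ⊗ ⋯ ⊗ (I^{⊗k_N}⊗X_N⊗I^{⊗(S_N−1−k_N)}))]
  = tr[ρ (X₁⊗⋯⊗X_N)]` for all matrices `X n` and all slot positions `k n`. -/
def IsSourceOp (d S : Fin N → ℕ) (ρ : Matrix (∀ n, Fin (d n)) (∀ n, Fin (d n)) ℂ)
    (T : Matrix (∀ p : Σ n : Fin N, Fin (S n), Fin (d p.1))
          (∀ p : Σ n : Fin N, Fin (S n), Fin (d p.1)) ℂ) : Prop :=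
  T.IsHermitian ∧
    ∀ (X : ∀ n, Matrix (Fin (d n)) (Fin (d n)) ℂ) (k : ∀ n, Fin (S n)),
      (T * tprod (slot X k)).trace = (ρ * tprod X).trace

end LqHV

noncomputable def Kker (Sn Dn : ℕ) (A B : Fin Sn → Fin Dn) (i j : Fin Dn) : ℂ :=
  (∑ s : Fin Sn, ∏ t : Fin Sn,
      if t = s then (if A t = i then 1 else 0) * (if B t = j then 1 else 0)
      else (if A t = B t then (Dn : ℂ)⁻¹ else 0))
  - ((Sn : ℂ) - 1) * (if i = j then 1 else 0) *
      ∏ t : Fin Sn, (if A t = B t then (Dn : ℂ)⁻¹ else 0)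

lemma Kker_conj {Sn Dn : ℕ} (A B : Fin Sn → Fin Dn) (i j : Fin Dn) :
    (starRingEnd ℂ) (Kker Sn Dn A B i j) = Kker Sn Dn A B i j := by
  unfold Kker
  rw [map_sub, map_sum, map_mul, map_mul, map_sub, map_prod]
  congr 1
  · refine Finset.sum_congr rfl fun s _ => ?_
    rw [map_prod]
    refine Finset.prod_congr rfl fun t _ => ?_
    split_ifs <;> simp [map_inv₀]
  · congr 1
    · congr 1 <;> [simp; skip]
      split_ifs <;> simp
    · refine Finset.prod_congr rfl fun t _ => ?_
      split_ifs <;> simp [map_inv₀]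

lemma Kker_swap {Sn Dn : ℕ} (A B : Fin Sn → Fin Dn) (i j : Fin Dn) :
    Kker Sn Dn A B i j = Kker Sn Dn B A j i := by
  unfold Kker
  congr 1
  · refine Finset.sum_congr rfl fun s _ => Finset.prod_congr rfl fun t _ => ?_
    by_cases h : t = s
    · simp [h, mul_comm]
    · simp only [if_neg h]
      congr 1
      exact propext eq_comm
  · congr 1
    · congr 2
      exact propext eq_comm
    · refine Finset.prod_congr rfl fun t _ => ?_
      congr 1
      exact propext eq_comm

lemma sum_sum_prod_eq {ι : Type} [Fintype ι] [DecidableEq ι] {α β : ι → Type}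
    [∀ t, Fintype (α t)] [∀ t, Fintype (β t)] (g : ∀ t, α t → β t → ℂ) :
    ∑ A : ∀ t, α t, ∑ B : ∀ t, β t, ∏ t, g t (A t) (B t) =
      ∏ t, ∑ a : α t, ∑ b : β t, g t a b := by
  rw [Fintype.prod_sum (f := fun t a => ∑ b : β t, g t a b)]
  exact Finset.sum_congr rfl fun A _ => (Fintype.prod_sum _).symm

lemma sum_sum_sum_comm {α β γ : Type} [Fintype α] [Fintype β] [Fintype γ]
    (f : α → β → γ → ℂ) :
    ∑ a : α, ∑ b : β, ∑ c : γ, f a b c = ∑ c : γ, ∑ a : α, ∑ b : β, f a b c := by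
  calc ∑ a : α, ∑ b : β, ∑ c : γ, f a b c
      = ∑ a : α, ∑ c : γ, ∑ b : β, f a b c :=
        Finset.sum_congr rfl fun a _ => Finset.sum_comm
    _ = ∑ c : γ, ∑ a : α, ∑ b : β, f a b c := Finset.sum_comm

lemma sum_comm4 {α β γ δ : Type} [Fintype α] [Fintype β] [Fintype γ] [Fintype δ]
    (f : α → β → γ → δ → ℂ) :
    ∑ a : α, ∑ b : β, ∑ c : γ, ∑ e : δ, f a b c e
      = ∑ c : γ, ∑ e : δ, ∑ a : α, ∑ b : β, f a b c e := by
  calc ∑ a : α, ∑ b : β, ∑ c : γ, ∑ e : δ, f a b c e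
      = ∑ a : α, ∑ c : γ, ∑ b : β, ∑ e : δ, f a b c e :=
        Finset.sum_congr rfl fun _ _ => Finset.sum_comm
    _ = ∑ c : γ, ∑ a : α, ∑ b : β, ∑ e : δ, f a b c e := Finset.sum_comm
    _ = ∑ c : γ, ∑ a : α, ∑ e : δ, ∑ b : β, f a b c e :=
        Finset.sum_congr rfl fun _ _ => Finset.sum_congr rfl fun _ _ => Finset.sum_comm
    _ = ∑ c : γ, ∑ e : δ, ∑ a : α, ∑ b : β, f a b c e :=
        Finset.sum_congr rfl fun _ _ => Finset.sum_comm

lemma site_sum {Sn Dn : ℕ} (hD : 0 < Dn) (X : Matrix (Fin Dn) (Fin Dn) ℂ)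
    (k : Fin Sn) (i j : Fin Dn) :
    ∑ A : Fin Sn → Fin Dn, ∑ B : Fin Sn → Fin Dn,
      Kker Sn Dn A B i j * ∏ s, (if s = k then X else 1) (B s) (A s) = X j i := by
  classical
  have hDne : (Dn : ℂ) ≠ 0 := Nat.cast_ne_zero.mpr hD.ne'
  have hma : ∀ (A B : Fin Sn → Fin Dn) (t : Fin Sn),
      (if t = k then X else 1) (B t) (A t)
        = (if t = k then X (B t) (A t) else if B t = A t then 1 else 0) := by
    intro A B t; by_cases h : t = k <;> simp [h, Matrix.one_apply]
  have hq : ∀ s t : Fin Sn,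
      (∑ a : Fin Dn, ∑ b : Fin Dn,
        (if t = s then (if a = i then (1:ℂ) else 0) * (if b = j then 1 else 0)
          else (if a = b then (Dn:ℂ)⁻¹ else 0))
        * (if t = k then X b a else if b = a then 1 else 0))
      = if t = s then (if s = k then X j i else if i = j then 1 else 0)
          else (if t = k then X.trace * (Dn:ℂ)⁻¹ else 1) := by
    intro s t
    by_cases h1 : t = s <;> by_cases h2 : t = k
    · subst h1; subst h2
      simp [ite_mul, Finset.sum_ite_eq']
    · subst h1
      simp only [if_pos rfl, if_neg h2]
      simp [ite_mul, Finset.sum_ite_eq', eq_comm]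
    · subst h2
      simp only [if_neg h1, if_pos rfl]
      simp [ite_mul, Finset.sum_ite_eq, Matrix.trace, Matrix.diag, Finset.sum_mul,
        Finset.mul_sum, mul_comm]
    · simp only [if_neg h1, if_neg h2]
      simp [ite_mul, Finset.sum_ite_eq, eq_comm]
      exact mul_inv_cancel₀ hDne
  have hr : ∀ t : Fin Sn,
      (∑ a : Fin Dn, ∑ b : Fin Dn,
        (if a = b then (Dn:ℂ)⁻¹ else 0) * (if t = k then X b a else if b = a then 1 else 0))
      = if t = k then X.trace * (Dn:ℂ)⁻¹ else 1 := by
    intro t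
    by_cases h2 : t = k
    · subst h2
      simp [ite_mul, Finset.sum_ite_eq, Matrix.trace, Matrix.diag, Finset.sum_mul,
        Finset.mul_sum, mul_comm]
    · simp only [if_neg h2]
      simp [ite_mul, Finset.sum_ite_eq, eq_comm]
      exact mul_inv_cancel₀ hDne
  simp only [hma]
  have step : ∀ A B : Fin Sn → Fin Dn,
      Kker Sn Dn A B i j
        * ∏ t, (if t = k then X (B t) (A t) else if B t = A t then 1 else 0)
      = (∑ s : Fin Sn, ∏ t, ((if t = s then (if A t = i then (1:ℂ) else 0) * (if B t = j then 1 else 0)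
              else (if A t = B t then (Dn:ℂ)⁻¹ else 0))
            * (if t = k then X (B t) (A t) else if B t = A t then 1 else 0)))
        - ((Sn:ℂ) - 1) * (if i = j then 1 else 0) *
          ∏ t, ((if A t = B t then (Dn:ℂ)⁻¹ else 0)
            * (if t = k then X (B t) (A t) else if B t = A t then 1 else 0)) := by
    intro A B
    rw [Kker, sub_mul, Finset.sum_mul, mul_assoc, ← Finset.prod_mul_distrib]
    exact congrArg₂ (· - ·)
      (Finset.sum_congr rfl fun s _ => (Finset.prod_mul_distrib).symm) rfl
  simp only [step, Finset.sum_sub_distrib, ← Finset.mul_sum]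
  rw [sum_sum_sum_comm]
  have hG : ∀ s : Fin Sn,
      (∑ A : Fin Sn → Fin Dn, ∑ B : Fin Sn → Fin Dn,
        ∏ t, ((if t = s then (if A t = i then (1:ℂ) else 0) * (if B t = j then 1 else 0)
              else (if A t = B t then (Dn:ℂ)⁻¹ else 0))
            * (if t = k then X (B t) (A t) else if B t = A t then 1 else 0)))
      = if s = k then X j i else (if i = j then (1:ℂ) else 0) * (X.trace * (Dn:ℂ)⁻¹) := by
    intro s
    rw [sum_sum_prod_eq (g := fun t a b =>
      (if t = s then (if a = i then (1:ℂ) else 0) * (if b = j then 1 else 0)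
          else (if a = b then (Dn:ℂ)⁻¹ else 0))
        * (if t = k then X b a else if b = a then 1 else 0))]
    rw [Finset.prod_congr rfl fun t _ => hq s t]
    by_cases hsk : s = k
    · subst hsk
      rw [Finset.prod_congr rfl (g := fun t => if t = s then X j i else 1)
        (fun t _ => by by_cases h : t = s <;> simp [h])]
      simp [Finset.prod_ite_eq']
    · rw [Finset.prod_congr rfl (g := fun t =>
        (if t = s then (if i = j then (1:ℂ) else 0) else 1)
          * (if t = k then X.trace * (Dn:ℂ)⁻¹ else 1))
        (fun t _ => by
          by_cases h1 : t = s <;> by_cases h2 : t = k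
          · exact absurd (h1 ▸ h2) hsk
          · simp [h1, h2, hsk]
          · simp [h1, h2, Ne.symm hsk]
          · simp [h1, h2])]
      rw [Finset.prod_mul_distrib]
      simp [Finset.prod_ite_eq', hsk]
  rw [Finset.sum_congr rfl fun s _ => hG s]
  have hH :
      (∑ A : Fin Sn → Fin Dn, ∑ B : Fin Sn → Fin Dn,
        ∏ t, ((if A t = B t then (Dn:ℂ)⁻¹ else 0)
            * (if t = k then X (B t) (A t) else if B t = A t then 1 else 0)))
      = X.trace * (Dn:ℂ)⁻¹ := by
    rw [sum_sum_prod_eq (g := fun t a b =>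
      (if a = b then (Dn:ℂ)⁻¹ else 0) * (if t = k then X b a else if b = a then 1 else 0))]
    rw [Finset.prod_congr rfl fun t _ => hr t]
    simp [Finset.prod_ite_eq']
  rw [hH]
  have hcount : (∑ s : Fin Sn, if s = k then X j i
      else (if i = j then (1:ℂ) else 0) * (X.trace * (Dn:ℂ)⁻¹))
      = (Sn : ℂ) * ((if i = j then (1:ℂ) else 0) * (X.trace * (Dn:ℂ)⁻¹))
        + X j i - (if i = j then (1:ℂ) else 0) * (X.trace * (Dn:ℂ)⁻¹) := by
    have h0 : ∀ s : Fin Sn, (if s = k then X j i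
        else (if i = j then (1:ℂ) else 0) * (X.trace * (Dn:ℂ)⁻¹))
        = (if i = j then (1:ℂ) else 0) * (X.trace * (Dn:ℂ)⁻¹)
          + (if s = k then X j i - (if i = j then (1:ℂ) else 0) * (X.trace * (Dn:ℂ)⁻¹) else 0) := by
      intro s; by_cases h : s = k <;> simp [h]
    rw [Finset.sum_congr rfl fun s _ => h0 s, Finset.sum_add_distrib,
      Finset.sum_const, Finset.sum_ite_eq' Finset.univ k, Finset.card_univ,
      Fintype.card_fin, nsmul_eq_mul]
    simp; ring
  rw [hcount]
  ring

open LqHV in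
/-- **Proposition 1.** For every state `ρ` on `ℂ^{d₁} ⊗ ⋯ ⊗ ℂ^{d_N}` and all positive integers
`S₁, …, S_N ≥ 1`, there exists an `S₁ × ⋯ × S_N`-setting source operator for `ρ`. -/
theorem exists_source_operator {N : ℕ} (d S : Fin N → ℕ) (hS : ∀ n, 1 ≤ S n)
    (ρ : Matrix (∀ n, Fin (d n)) (∀ n, Fin (d n)) ℂ)
    (hρ : ρ.PosSemidef) (hρtr : ρ.trace = 1) :
    ∃ T, IsSourceOp d S ρ T := by
  classical
  have hd : ∀ n, 0 < d n := by
    intro n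
    rcases Nat.eq_zero_or_pos (d n) with h | h
    · exfalso
      haveI : IsEmpty (∀ m, Fin (d m)) := ⟨fun x => absurd (x n).isLt (by omega)⟩
      rw [Matrix.trace, Finset.univ_eq_empty, Finset.sum_empty] at hρtr
      exact one_ne_zero hρtr.symm
    · exact h
  refine ⟨fun a b => ∑ i : ∀ n, Fin (d n), ∑ j : ∀ n, Fin (d n), ρ i j *
      ∏ n, Kker (S n) (d n) (fun s => a ⟨n, s⟩) (fun s => b ⟨n, s⟩) (i n) (j n), ?_, ?_⟩
  · -- Hermitian
    show _ᴴ = _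
    ext a b
    erw [Matrix.conjTranspose_apply]
    have h1 : ∀ i j : ∀ n, Fin (d n),
        star (ρ i j * ∏ n, Kker (S n) (d n) (fun s => b ⟨n, s⟩) (fun s => a ⟨n, s⟩) (i n) (j n))
        = ρ j i * ∏ n, Kker (S n) (d n) (fun s => a ⟨n, s⟩) (fun s => b ⟨n, s⟩) (j n) (i n) := by
      intro i j
      rw [star_mul']
      congr 1
      · exact hρ.1.apply j i
      · rw [star_prod]
        refine Finset.prod_congr rfl fun n _ => ?_
        exact (Kker_conj _ _ _ _).trans (Kker_swap _ _ _ _)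
    simp only [star_sum, h1]
    exact Finset.sum_comm
  · intro X k
    have hrhs : (ρ * tprod X).trace
        = ∑ i : ∀ n, Fin (d n), ∑ j : ∀ n, Fin (d n), ρ i j * ∏ n, X n (j n) (i n) := by
      simp [Matrix.trace, Matrix.diag, Matrix.mul_apply, LqHV.tprod]
    rw [hrhs]
    calc (Matrix.trace _)
        = ∑ a : ∀ p : Σ n : Fin N, Fin (S n), Fin (d p.1),
            ∑ b : ∀ p : Σ n : Fin N, Fin (S n), Fin (d p.1),
            (∑ i : ∀ n, Fin (d n), ∑ j : ∀ n, Fin (d n), ρ i j *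
              ∏ n, Kker (S n) (d n) (fun s => a ⟨n, s⟩) (fun s => b ⟨n, s⟩) (i n) (j n))
            * ∏ p : Σ n : Fin N, Fin (S n), (slot X k p) (b p) (a p) := by
          simp only [Matrix.trace, Matrix.diag]
          refine Finset.sum_congr rfl fun a _ => ?_
          erw [Matrix.mul_apply]
          simp [LqHV.tprod]
      _ = ∑ a : ∀ p : Σ n : Fin N, Fin (S n), Fin (d p.1),
            ∑ b : ∀ p : Σ n : Fin N, Fin (S n), Fin (d p.1),
            ∑ i : ∀ n, Fin (d n), ∑ j : ∀ n, Fin (d n), ρ i j *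
              ∏ n, (Kker (S n) (d n) (fun s => a ⟨n, s⟩) (fun s => b ⟨n, s⟩) (i n) (j n)
                * ∏ s : Fin (S n), (if s = k n then X n else 1) (b ⟨n, s⟩) (a ⟨n, s⟩)) := by
          refine Finset.sum_congr rfl fun a _ => Finset.sum_congr rfl fun b _ => ?_
          rw [Finset.sum_mul]
          refine Finset.sum_congr rfl fun i _ => ?_
          rw [Finset.sum_mul]
          refine Finset.sum_congr rfl fun j _ => ?_
          rw [mul_assoc]
          congr 1
          rw [← Finset.univ_sigma_univ, Finset.prod_sigma, ← Finset.prod_mul_distrib]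
          rfl
      _ = ∑ i : ∀ n, Fin (d n), ∑ j : ∀ n, Fin (d n),
            ∑ a : ∀ p : Σ n : Fin N, Fin (S n), Fin (d p.1),
            ∑ b : ∀ p : Σ n : Fin N, Fin (S n), Fin (d p.1), ρ i j *
              ∏ n, (Kker (S n) (d n) (fun s => a ⟨n, s⟩) (fun s => b ⟨n, s⟩) (i n) (j n)
                * ∏ s : Fin (S n), (if s = k n then X n else 1) (b ⟨n, s⟩) (a ⟨n, s⟩)) :=
          sum_comm4 _
      _ = ∑ i : ∀ n, Fin (d n), ∑ j : ∀ n, Fin (d n), ρ i j * ∏ n, X n (j n) (i n) := by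
          refine Finset.sum_congr rfl fun i _ => Finset.sum_congr rfl fun j _ => ?_
          simp only [← Finset.mul_sum]
          congr 1
          have hsw : (∑ a : ∀ p : Σ n : Fin N, Fin (S n), Fin (d p.1),
              ∑ b : ∀ p : Σ n : Fin N, Fin (S n), Fin (d p.1),
              ∏ n, (Kker (S n) (d n) (fun s => a ⟨n, s⟩) (fun s => b ⟨n, s⟩) (i n) (j n)
                * ∏ s : Fin (S n), (if s = k n then X n else 1) (b ⟨n, s⟩) (a ⟨n, s⟩)))
              = ∑ A : ∀ n : Fin N, Fin (S n) → Fin (d n), ∑ B : ∀ n : Fin N, Fin (S n) → Fin (d n),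
              ∏ n, (Kker (S n) (d n) (A n) (B n) (i n) (j n)
                * ∏ s : Fin (S n), (if s = k n then X n else 1) (B n s) (A n s)) := by
            refine Fintype.sum_equiv (Equiv.piCurry fun (n : Fin N) (_ : Fin (S n)) => Fin (d n))
              _ _ fun a => ?_
            exact Fintype.sum_equiv (Equiv.piCurry fun (n : Fin N) (_ : Fin (S n)) => Fin (d n))
              _ _ fun b => rfl
          rw [hsw, sum_sum_prod_eq (g := fun n C D => Kker (S n) (d n) C D (i n) (j n)
            * ∏ s : Fin (S n), (if s = k n then X n else 1) (D s) (C s))]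
          exact Finset.prod_congr rfl fun n _ => site_sum (hd n) (X n) (k n) (i n) (j n)
end

section
/- The covering norm ‖W‖_cov := inf{tr W_cov : W_cov a covering of W} is a norm on the real vector space of Hermitian matrices on ℂ^{k₁}⊗⋯⊗ℂ^{k_m}: (i) ‖W‖_cov ≥ 0, with ‖W‖_cov = 0 if and only if W = 0; (ii) ‖αW‖_cov = |α|·‖W‖_cov for every real α; (iii) ‖W₁ + W₂‖_cov ≤ ‖W₁‖_cov + ‖W₂‖_cov. -/
open scoped ComplexOrder Matrix

namespace LqHV

/-- Elementary (product) vector `ψ₁ ⊗ ⋯ ⊗ ψ_m` of a family of vectors. -/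
def tvec {ι : Type} [Fintype ι] [DecidableEq ι] {κ : ι → Type} (ψ : ∀ i, κ i → ℂ) :
    (∀ i, κ i) → ℂ :=
  fun a => ∏ i, ψ i (a i)

/-- A matrix `Z` on the tensor product space `ℂ^{k₁} ⊗ ⋯ ⊗ ℂ^{k_m}` is tensor positive if
`⟨ψ₁⊗⋯⊗ψ_m, Z (ψ₁⊗⋯⊗ψ_m)⟩ ≥ 0` for all vectors `ψ_j`. -/
def TensorPos {ι : Type} [Fintype ι] [DecidableEq ι] {κ : ι → Type} [∀ i, Fintype (κ i)]
    (Z : Matrix (∀ i, κ i) (∀ i, κ i) ℂ) : Prop :=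
  ∀ ψ : ∀ i, κ i → ℂ, 0 ≤ star (tvec ψ) ⬝ᵥ Z.mulVec (tvec ψ)

/-- `C` is a covering of `Z`: a tensor positive matrix such that `C + Z` and `C - Z` are both
tensor positive. -/
def IsCovering {ι : Type} [Fintype ι] [DecidableEq ι] {κ : ι → Type} [∀ i, Fintype (κ i)]
    (Z C : Matrix (∀ i, κ i) (∀ i, κ i) ℂ) : Prop :=
  TensorPos C ∧ TensorPos (C + Z) ∧ TensorPos (C - Z)

/-- The covering norm `‖Z‖_cov = inf{tr C : C a covering of Z}`. -/
noncomputable def covNorm {ι : Type} [Fintype ι] [DecidableEq ι] {κ : ι → Type}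
    [∀ i, Fintype (κ i)] (Z : Matrix (∀ i, κ i) (∀ i, κ i) ℂ) : ℝ :=
  sInf ((fun C => (Matrix.trace C).re) '' {C | IsCovering Z C})

/-- The absolute value `|W| := √(Wᴴ W)` of a matrix (`= √(W²)` for Hermitian `W`). -/
noncomputable def matAbs {n : Type} [Fintype n] [DecidableEq n]
    (W : Matrix n n ℂ) : Matrix n n ℂ :=
  ((Matrix.posSemidef_conjTranspose_mul_self W).1.eigenvectorUnitary : Matrix n n ℂ) *
    Matrix.diagonal ((↑) ∘ Real.sqrt ∘ (Matrix.posSemidef_conjTranspose_mul_self W).1.eigenvalues) *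
    (star ((Matrix.posSemidef_conjTranspose_mul_self W).1.eigenvectorUnitary : Matrix n n ℂ))

/-- The trace norm `‖W‖₁ := tr √(Wᴴ W)`. -/
noncomputable def traceNorm {n : Type} [Fintype n] [DecidableEq n]
    (W : Matrix n n ℂ) : ℝ :=
  ((matAbs W).trace).re

end LqHV

open scoped Pointwise

namespace LqHV

/-! ### Auxiliary material for the proof -/

section Generic

variable {n : Type} [Fintype n]

/-- Expansion of the quadratic form. -/
lemma qf_expand (Z : Matrix n n ℂ) (v : n → ℂ) :
    star v ⬝ᵥ Z.mulVec v = ∑ c, ∑ d, Z c d * ((starRingEnd ℂ) (v c) * v d) := by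
  rw [dotProduct]
  refine Finset.sum_congr rfl fun c _ => ?_
  rw [Matrix.mulVec, dotProduct, Finset.mul_sum]
  refine Finset.sum_congr rfl fun d _ => ?_
  simp only [Pi.star_apply, Complex.star_def]
  ring

lemma qf_im_zero {Z : Matrix n n ℂ} (hZ : Z.IsHermitian) (v : n → ℂ) :
    (star v ⬝ᵥ Z.mulVec v).im = 0 := by
  rw [← Complex.conj_eq_iff_im]
  rw [qf_expand, map_sum, Finset.sum_comm]
  refine Finset.sum_congr rfl fun c _ => ?_
  rw [map_sum]
  refine Finset.sum_congr rfl fun d _ => ?_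
  have h := hZ.apply c d
  simp only [Complex.star_def] at h
  simp only [map_mul, Complex.conj_conj, ← h]
  ring

lemma abs_qf_le (Z : Matrix n n ℂ) (v : n → ℂ) :
    ‖star v ⬝ᵥ Z.mulVec v‖ ≤
      (∑ a, ∑ b, ‖Z a b‖) * ∑ c, Complex.normSq (v c) := by
  classical
  rw [qf_expand]
  refine le_trans (norm_sum_le _ _) ?_
  rw [Finset.sum_mul]
  refine Finset.sum_le_sum fun a _ => ?_
  refine le_trans (norm_sum_le _ _) ?_
  rw [Finset.sum_mul]
  refine Finset.sum_le_sum fun b _ => ?_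
  rw [norm_mul, norm_mul, Complex.norm_conj]
  have hva : Complex.normSq (v a) ≤ ∑ c, Complex.normSq (v c) :=
    Finset.single_le_sum (fun c _ => Complex.normSq_nonneg _) (Finset.mem_univ a)
  have hvb : Complex.normSq (v b) ≤ ∑ c, Complex.normSq (v c) :=
    Finset.single_le_sum (fun c _ => Complex.normSq_nonneg _) (Finset.mem_univ b)
  have h2a : ‖v a‖ ^ 2 = Complex.normSq (v a) := Complex.sq_norm _
  have h2b : ‖v b‖ ^ 2 = Complex.normSq (v b) := Complex.sq_norm _
  have h : ‖v a‖ * ‖v b‖ ≤ ∑ c, Complex.normSq (v c) := by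
    nlinarith [norm_nonneg (v a), norm_nonneg (v b),
      sq_nonneg (‖v a‖ - ‖v b‖)]
  calc ‖Z a b‖ * (‖v a‖ * ‖v b‖)
      ≤ ‖Z a b‖ * ∑ c, Complex.normSq (v c) := by
        exact mul_le_mul_of_nonneg_left h (norm_nonneg _)
    _ = _ := by ring

lemma qf_smul_one [DecidableEq n] (t : ℝ) (v : n → ℂ) :
    star v ⬝ᵥ (((t : ℂ) • (1 : Matrix n n ℂ)).mulVec v) =
      ((t * ∑ c, Complex.normSq (v c) : ℝ) : ℂ) := by
  rw [Matrix.smul_mulVec, Matrix.one_mulVec, dotProduct_smul, smul_eq_mul]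
  have h : star v ⬝ᵥ v = ((∑ c, Complex.normSq (v c) : ℝ) : ℂ) := by
    rw [dotProduct]
    push_cast
    refine Finset.sum_congr rfl fun c _ => ?_
    simp only [Pi.star_apply, Complex.star_def]
    rw [mul_comm, Complex.mul_conj]
  rw [h]
  push_cast
  ring

end Generic

section PV

/-- per-coordinate test vector used for the entry bound -/
def pv {α : Type} [DecidableEq α] (a b : α) (e : ℕ) : α → ℂ :=
  fun x => if x = a then 1 else if x = b then Complex.I ^ e else 0

lemma pv_abs_le {α : Type} [DecidableEq α] (a b : α) (e : ℕ) (x : α) :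
    ‖pv a b e x‖ ≤ 1 := by
  unfold pv; split_ifs <;> simp

lemma pv_a {α : Type} [DecidableEq α] (a b : α) (e : ℕ) : pv a b e a = 1 := by simp [pv]

lemma hI2 : Complex.I ^ (2:ℕ) = -1 := Complex.I_sq
lemma hI3 : Complex.I ^ (3:ℕ) = -Complex.I := by rw [pow_succ, hI2]; ring
lemma hJ2 : (-Complex.I) ^ (2:ℕ) = -1 := by rw [neg_pow, hI2]; norm_num
lemma hJ3 : (-Complex.I) ^ (3:ℕ) = Complex.I := by rw [neg_pow, hI3]; norm_num

lemma coord_sum₁ {α : Type} [DecidableEq α] (a b c d : α) :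
    ∑ e : Fin 4, ((starRingEnd ℂ) (pv a b (e : ℕ) b) *
      ((starRingEnd ℂ) (pv a b (e : ℕ) c) * pv a b (e : ℕ) d)) =
      if c = a ∧ d = b then 4 else 0 := by
  rw [Fin.sum_univ_four]
  by_cases hab : b = a <;>
    by_cases hca : c = a <;> by_cases hcb : c = b <;>
    by_cases hda : d = a <;> by_cases hdb : d = b <;>
    (try simp_all [pv, (show ((0:Fin 4):ℕ) = 0 from rfl), (show ((1:Fin 4):ℕ) = 1 from rfl),
      (show ((2:Fin 4):ℕ) = 2 from rfl), (show ((3:Fin 4):ℕ) = 3 from rfl),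
      map_pow, hI2, hI3, hJ2, hJ3, Complex.conj_I, eq_comm]) <;>
    (try ring_nf) <;> (try norm_num [hI2, hI3, hJ2, hJ3])

lemma coord_sum₂ {α : Type} [DecidableEq α] (a b c d : α) :
    ∑ e : Fin 4, ((starRingEnd ℂ) (pv a b (e : ℕ) c) * pv a b (e : ℕ) d) =
      if c = d ∧ (c = a ∨ c = b) then 4 else 0 := by
  rw [Fin.sum_univ_four]
  by_cases hca : c = a <;> by_cases hcb : c = b <;>
    by_cases hda : d = a <;> by_cases hdb : d = b <;>
    (try simp_all [pv, (show ((0:Fin 4):ℕ) = 0 from rfl), (show ((1:Fin 4):ℕ) = 1 from rfl),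
      (show ((2:Fin 4):ℕ) = 2 from rfl), (show ((3:Fin 4):ℕ) = 3 from rfl),
      map_pow, hI2, hI3, hJ2, hJ3, Complex.conj_I, eq_comm]) <;>
    (try ring_nf) <;> (try norm_num [hI2, hI3, hJ2, hJ3])

end PV

section Aux

variable {ι : Type} [Fintype ι] [DecidableEq ι] {κ : ι → Type} [∀ i, Fintype (κ i)]
  [∀ i, DecidableEq (κ i)]

lemma tensorPos_zero : TensorPos (0 : Matrix (∀ i, κ i) (∀ i, κ i) ℂ) := by
  intro ψ
  simp [Matrix.zero_mulVec, dotProduct_zero]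

lemma tensorPos_add {Y Z : Matrix (∀ i, κ i) (∀ i, κ i) ℂ}
    (hY : TensorPos Y) (hZ : TensorPos Z) : TensorPos (Y + Z) := by
  intro ψ
  rw [Matrix.add_mulVec, dotProduct_add]
  exact add_nonneg (hY ψ) (hZ ψ)

lemma tensorPos_smul {Z : Matrix (∀ i, κ i) (∀ i, κ i) ℂ}
    (hZ : TensorPos Z) {r : ℝ} (hr : 0 ≤ r) : TensorPos ((r : ℂ) • Z) := by
  intro ψ
  rw [Matrix.smul_mulVec, dotProduct_smul, smul_eq_mul]
  exact mul_nonneg (Complex.zero_le_real.2 hr) (hZ ψ)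

lemma isCovering_smul {Z C : Matrix (∀ i, κ i) (∀ i, κ i) ℂ} {r : ℝ} (hr : 0 < r)
    (h : IsCovering Z C) : IsCovering ((r : ℂ) • Z) ((r : ℂ) • C) := by
  refine ⟨tensorPos_smul h.1 hr.le, ?_, ?_⟩
  · rw [← smul_add]; exact tensorPos_smul h.2.1 hr.le
  · rw [← smul_sub]; exact tensorPos_smul h.2.2 hr.le

lemma isCovering_neg_iff {Z C : Matrix (∀ i, κ i) (∀ i, κ i) ℂ} :
    IsCovering (-Z) C ↔ IsCovering Z C := by
  constructor
  · rintro ⟨h1, h2, h3⟩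
    exact ⟨h1, by simpa using h3, by simpa [sub_eq_add_neg] using h2⟩
  · rintro ⟨h1, h2, h3⟩
    exact ⟨h1, by simpa [sub_eq_add_neg] using h3, by simpa [sub_neg_eq_add] using h2⟩

lemma tvec_single (a : ∀ i, κ i) :
    tvec (fun i x => if x = a i then (1:ℂ) else 0) = fun c => if c = a then 1 else 0 := by
  funext c
  rw [tvec, Fintype.prod_boole]
  simp [funext_iff]

lemma tensorPos_diag {C : Matrix (∀ i, κ i) (∀ i, κ i) ℂ} (hC : TensorPos C) (a : ∀ i, κ i) :
    0 ≤ (C a a).re ∧ (C a a).im = 0 := by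
  have h := hC (fun i x => if x = a i then 1 else 0)
  rw [tvec_single] at h
  have hq : star (fun c => if c = a then (1:ℂ) else 0) ⬝ᵥ
      C.mulVec (fun c => if c = a then (1:ℂ) else 0) = C a a := by
    rw [qf_expand]
    simp [apply_ite (starRingEnd ℂ), mul_ite, ite_mul, Finset.sum_ite_eq']
  rw [hq] at h
  exact ⟨(Complex.nonneg_iff.1 h).1, ((Complex.nonneg_iff.1 h).2).symm⟩

lemma trace_re_nonneg {C : Matrix (∀ i, κ i) (∀ i, κ i) ℂ} (hC : TensorPos C) :
    0 ≤ (Matrix.trace C).re := by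
  rw [Matrix.trace, Complex.re_sum]
  exact Finset.sum_nonneg fun a _ => (tensorPos_diag hC a).1

lemma exists_covering {W : Matrix (∀ i, κ i) (∀ i, κ i) ℂ} (hW : W.IsHermitian) :
    ∃ C, IsCovering W C := by
  classical
  set t : ℝ := ∑ a, ∑ b, ‖W a b‖ with ht
  have htn : 0 ≤ t :=
    Finset.sum_nonneg fun a _ => Finset.sum_nonneg fun b _ => norm_nonneg _
  refine ⟨(t : ℂ) • 1, ?_, ?_, ?_⟩
  · intro ψ
    rw [qf_smul_one]
    exact Complex.zero_le_real.2 (mul_nonneg htn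
      (Finset.sum_nonneg fun c _ => Complex.normSq_nonneg _))
  · intro ψ
    set v := tvec ψ
    rw [Matrix.add_mulVec, dotProduct_add, qf_smul_one]
    rw [Complex.nonneg_iff]
    constructor
    · have h1 := abs_qf_le W v
      have h2 := Complex.abs_re_le_norm (star v ⬝ᵥ W.mulVec v)
      simp only [Complex.add_re, Complex.ofReal_re]
      have := abs_le.1 (le_trans h2 h1)
      have hn2 : 0 ≤ ∑ c, Complex.normSq (v c) :=
        Finset.sum_nonneg fun c _ => Complex.normSq_nonneg _
      nlinarith [this.1]
    · simp [qf_im_zero hW v]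
  · intro ψ
    set v := tvec ψ
    rw [Matrix.sub_mulVec, dotProduct_sub, qf_smul_one]
    rw [Complex.nonneg_iff]
    constructor
    · have h1 := abs_qf_le W v
      have h2 := Complex.abs_re_le_norm (star v ⬝ᵥ W.mulVec v)
      simp only [Complex.sub_re, Complex.ofReal_re]
      have := abs_le.1 (le_trans h2 h1)
      have hn2 : 0 ≤ ∑ c, Complex.normSq (v c) :=
        Finset.sum_nonneg fun c _ => Complex.normSq_nonneg _
      nlinarith [this.2]
    · simp [qf_im_zero hW v]

lemma sum_fn_prod {γ : Type} [Fintype γ] (f : ∀ i : ι, γ → ℂ) :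
    ∑ ε : ι → γ, ∏ i, f i (ε i) = ∏ i, ∑ e : γ, f i e := by
  rw [Finset.prod_univ_sum, Fintype.piFinset_univ]

lemma prod_ite_const {P : ι → Prop} [DecidablePred P] (x : ℂ) :
    ∏ i, (if P i then x else 0) = if ∀ i, P i then x ^ (Fintype.card ι) else 0 := by
  by_cases h : ∀ i, P i
  · rw [if_pos h, Finset.prod_congr rfl (fun i _ => if_pos (h i)), Finset.prod_const,
      Finset.card_univ]
  · rw [if_neg h]
    push_neg at h
    obtain ⟨i, hi⟩ := h
    exact Finset.prod_eq_zero (Finset.mem_univ i) (if_neg hi)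

/-- The key entry bound: every entry of `W` is dominated by the trace of any covering. -/
lemma entry_bound {W C : Matrix (∀ i, κ i) (∀ i, κ i) ℂ} (h : IsCovering W C)
    (a b : ∀ i, κ i) : ‖W a b‖ ≤ (Matrix.trace C).re := by
  classical
  set ψ : (ι → Fin 4) → ∀ i, κ i → ℂ := fun ε i => pv (a i) (b i) (ε i : ℕ) with hψ
  set T : (ι → Fin 4) → (∀ i, κ i) → ℂ := fun ε => tvec (ψ ε) with hT
  set M : ℂ := (4 : ℂ) ^ (Fintype.card ι) with hM
  -- inner character sums
  have inner₁ : ∀ c d : ∀ i, κ i,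
      ∑ ε : ι → Fin 4, ((starRingEnd ℂ) (T ε b) * ((starRingEnd ℂ) (T ε c) * T ε d)) =
        if c = a ∧ d = b then M else 0 := by
    intro c d
    have hterm : ∀ ε : ι → Fin 4,
        (starRingEnd ℂ) (T ε b) * ((starRingEnd ℂ) (T ε c) * T ε d) =
          ∏ i, ((starRingEnd ℂ) (pv (a i) (b i) ((ε i : ℕ)) (b i)) *
            ((starRingEnd ℂ) (pv (a i) (b i) ((ε i : ℕ)) (c i)) *
              pv (a i) (b i) ((ε i : ℕ)) (d i))) := by
      intro ε
      simp only [hT, hψ, tvec, map_prod, Finset.prod_mul_distrib]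
    simp_rw [hterm]
    have hsum : ∑ ε : ι → Fin 4,
        ∏ i, ((starRingEnd ℂ) (pv (a i) (b i) ((ε i : ℕ)) (b i)) *
            ((starRingEnd ℂ) (pv (a i) (b i) ((ε i : ℕ)) (c i)) *
              pv (a i) (b i) ((ε i : ℕ)) (d i))) =
        ∏ i, ∑ e : Fin 4, ((starRingEnd ℂ) (pv (a i) (b i) ((e : ℕ)) (b i)) *
            ((starRingEnd ℂ) (pv (a i) (b i) ((e : ℕ)) (c i)) *
              pv (a i) (b i) ((e : ℕ)) (d i))) :=
      sum_fn_prod (γ := Fin 4) (fun i e => ((starRingEnd ℂ) (pv (a i) (b i) ((e : ℕ)) (b i)) *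
            ((starRingEnd ℂ) (pv (a i) (b i) ((e : ℕ)) (c i)) *
              pv (a i) (b i) ((e : ℕ)) (d i))))
    rw [hsum]
    simp_rw [coord_sum₁]
    rw [prod_ite_const]
    have hiff : (∀ i, c i = a i ∧ d i = b i) ↔ (c = a ∧ d = b) := by
      simp [funext_iff, forall_and]
    simp only [hM]
    exact if_congr hiff rfl rfl
  have inner₂ : ∀ c d : ∀ i, κ i,
      ∑ ε : ι → Fin 4, ((starRingEnd ℂ) (T ε c) * T ε d) =
        if c = d ∧ (∀ i, c i = a i ∨ c i = b i) then M else 0 := by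
    intro c d
    have hterm : ∀ ε : ι → Fin 4,
        (starRingEnd ℂ) (T ε c) * T ε d =
          ∏ i, ((starRingEnd ℂ) (pv (a i) (b i) ((ε i : ℕ)) (c i)) *
              pv (a i) (b i) ((ε i : ℕ)) (d i)) := by
      intro ε
      simp only [hT, hψ, tvec, map_prod, Finset.prod_mul_distrib]
    simp_rw [hterm]
    have hsum : ∑ ε : ι → Fin 4,
        ∏ i, ((starRingEnd ℂ) (pv (a i) (b i) ((ε i : ℕ)) (c i)) *
              pv (a i) (b i) ((ε i : ℕ)) (d i)) =
        ∏ i, ∑ e : Fin 4, ((starRingEnd ℂ) (pv (a i) (b i) ((e : ℕ)) (c i)) *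
              pv (a i) (b i) ((e : ℕ)) (d i)) :=
      sum_fn_prod (γ := Fin 4) (fun i e => ((starRingEnd ℂ) (pv (a i) (b i) ((e : ℕ)) (c i)) *
              pv (a i) (b i) ((e : ℕ)) (d i)))
    rw [hsum]
    simp_rw [coord_sum₂]
    rw [prod_ite_const]
    have hiff : (∀ i, c i = d i ∧ (c i = a i ∨ c i = b i)) ↔
        (c = d ∧ ∀ i, c i = a i ∨ c i = b i) := by
      simp [funext_iff, forall_and]
    simp only [hM]
    exact if_congr hiff rfl rfl
  -- key identity 1
  have key₁ : ∑ ε : ι → Fin 4, ((starRingEnd ℂ) (T ε b) * (star (T ε) ⬝ᵥ W.mulVec (T ε))) =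
      M * W a b := by
    have expand : ∀ ε : ι → Fin 4,
        (starRingEnd ℂ) (T ε b) * (star (T ε) ⬝ᵥ W.mulVec (T ε)) =
          ∑ c, ∑ d, W c d *
            ((starRingEnd ℂ) (T ε b) * ((starRingEnd ℂ) (T ε c) * T ε d)) := by
      intro ε
      rw [qf_expand, Finset.mul_sum]
      refine Finset.sum_congr rfl fun c _ => ?_
      rw [Finset.mul_sum]
      refine Finset.sum_congr rfl fun d _ => ?_
      ring
    simp_rw [expand]
    rw [Finset.sum_comm]
    have hsw : ∀ c, ∑ ε : ι → Fin 4, ∑ d, W c d *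
        ((starRingEnd ℂ) (T ε b) * ((starRingEnd ℂ) (T ε c) * T ε d)) =
        ∑ d, ∑ ε : ι → Fin 4, W c d *
        ((starRingEnd ℂ) (T ε b) * ((starRingEnd ℂ) (T ε c) * T ε d)) := fun c =>
      Finset.sum_comm
    simp_rw [hsw, ← Finset.mul_sum, inner₁]
    have hcd : ∀ c, (∑ d, W c d * (if c = a ∧ d = b then M else 0)) =
        if c = a then W c b * M else 0 := by
      intro c
      by_cases hc : c = a
      · subst hc
        simp [mul_ite, Finset.sum_ite_eq']
      · simp [hc]
    simp_rw [hcd]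
    rw [Finset.sum_ite_eq' Finset.univ a (fun c => W c b * M)]
    simp [mul_comm]
  -- key identity 2
  have key₂ : ∑ ε : ι → Fin 4, (star (T ε) ⬝ᵥ C.mulVec (T ε)) =
      M * ∑ c, (if ∀ i, c i = a i ∨ c i = b i then C c c else 0) := by
    have expand : ∀ ε : ι → Fin 4,
        (star (T ε) ⬝ᵥ C.mulVec (T ε)) =
          ∑ c, ∑ d, C c d * ((starRingEnd ℂ) (T ε c) * T ε d) := fun ε => qf_expand _ _
    simp_rw [expand]
    rw [Finset.sum_comm]
    have hsw : ∀ c, ∑ ε : ι → Fin 4, ∑ d, C c d * ((starRingEnd ℂ) (T ε c) * T ε d) =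
        ∑ d, ∑ ε : ι → Fin 4, C c d * ((starRingEnd ℂ) (T ε c) * T ε d) := fun c =>
      Finset.sum_comm
    simp_rw [hsw, ← Finset.mul_sum, inner₂]
    have hcd : ∀ c, (∑ d, C c d * (if c = d ∧ (∀ i, c i = a i ∨ c i = b i) then M else 0)) =
        (if ∀ i, c i = a i ∨ c i = b i then C c c else 0) * M := by
      intro c
      by_cases hc : ∀ i, c i = a i ∨ c i = b i
      · simp only [hc, and_true, if_pos hc]
        simp [mul_ite, Finset.sum_ite_eq]
      · simp [hc]
    simp_rw [hcd]
    rw [← Finset.sum_mul]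
    ring
  -- pointwise bounds from the covering property
  have habs : ∀ ε : ι → Fin 4,
      ‖star (T ε) ⬝ᵥ W.mulVec (T ε)‖ ≤ (star (T ε) ⬝ᵥ C.mulVec (T ε)).re := by
    intro ε
    have h1 := h.2.1 (ψ ε)
    have h2 := h.2.2 (ψ ε)
    rw [Matrix.add_mulVec, dotProduct_add, Complex.nonneg_iff] at h1
    rw [Matrix.sub_mulVec, dotProduct_sub, Complex.nonneg_iff] at h2
    have hTT : tvec (ψ ε) = T ε := rfl
    rw [hTT] at h1 h2
    set qC := star (T ε) ⬝ᵥ C.mulVec (T ε)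
    set qW := star (T ε) ⬝ᵥ W.mulVec (T ε)
    have him : qW.im = 0 := by
      have e1 := h1.2
      have e2 := h2.2
      simp only [Complex.add_im, Complex.sub_im] at e1 e2
      linarith
    have hre : |qW.re| ≤ qC.re := by
      have e1 := h1.1
      have e2 := h2.1
      simp only [Complex.add_re, Complex.sub_re] at e1 e2
      rw [abs_le]; constructor <;> linarith
    have hqW : qW = ((qW.re : ℝ) : ℂ) := by
      apply Complex.ext <;> simp [him]
    calc ‖qW‖ = |qW.re| := by rw [hqW]; simp
      _ ≤ qC.re := hre
  -- bound |T ε b| ≤ 1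
  have hTb : ∀ ε : ι → Fin 4, ‖T ε b‖ ≤ 1 := by
    intro ε
    have hb : T ε b = ∏ i, pv (a i) (b i) ((ε i : ℕ)) (b i) := rfl
    rw [hb, norm_prod]
    exact Finset.prod_le_one (fun i _ => norm_nonneg _) (fun i _ => pv_abs_le _ _ _ _)
  -- assemble
  have hMre : ((4:ℝ) ^ (Fintype.card ι)) * ‖W a b‖ ≤
      ((4:ℝ) ^ (Fintype.card ι)) * (Matrix.trace C).re := by
    have hMW : ‖M * W a b‖ = ((4:ℝ) ^ (Fintype.card ι)) * ‖W a b‖ := by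
      rw [norm_mul, hM]
      norm_num
    have step1 : ‖M * W a b‖ ≤
        ∑ ε : ι → Fin 4, (star (T ε) ⬝ᵥ C.mulVec (T ε)).re := by
      rw [← key₁]
      refine le_trans (norm_sum_le _ _) ?_
      refine Finset.sum_le_sum fun ε _ => ?_
      rw [norm_mul, Complex.norm_conj]
      calc ‖T ε b‖ * ‖star (T ε) ⬝ᵥ W.mulVec (T ε)‖
          ≤ 1 * (star (T ε) ⬝ᵥ C.mulVec (T ε)).re := by
            exact mul_le_mul (hTb ε) (habs ε) (norm_nonneg _) zero_le_one
        _ = _ := one_mul _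
    have step2 : ∑ ε : ι → Fin 4, (star (T ε) ⬝ᵥ C.mulVec (T ε)).re ≤
        ((4:ℝ) ^ (Fintype.card ι)) * (Matrix.trace C).re := by
      rw [← Complex.re_sum, key₂]
      have hMcast : M = (((4:ℝ) ^ (Fintype.card ι) : ℝ) : ℂ) := by
        rw [hM]; push_cast; ring
      rw [hMcast, Complex.re_ofReal_mul]
      refine mul_le_mul_of_nonneg_left ?_ (by positivity)
      rw [Matrix.trace, Complex.re_sum, Complex.re_sum]
      refine Finset.sum_le_sum fun c _ => ?_
      rw [apply_ite Complex.re, Complex.zero_re]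
      split_ifs
      · exact le_refl _
      · exact (tensorPos_diag h.1 c).1
    rw [← hMW]
    exact le_trans step1 step2
  have h4 : (0:ℝ) < (4:ℝ) ^ (Fintype.card ι) := by positivity
  exact le_of_mul_le_mul_left hMre h4

/-! ### covNorm lemmas -/

lemma covSet_nonneg {Z : Matrix (∀ i, κ i) (∀ i, κ i) ℂ} :
    ∀ x ∈ ((fun C => (Matrix.trace C).re) '' {C | IsCovering Z C}), 0 ≤ x := by
  rintro x ⟨C, hC, rfl⟩
  exact trace_re_nonneg hC.1

lemma covNorm_nonneg (Z : Matrix (∀ i, κ i) (∀ i, κ i) ℂ) : 0 ≤ covNorm Z :=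
  Real.sInf_nonneg covSet_nonneg

lemma covSet_bddBelow (Z : Matrix (∀ i, κ i) (∀ i, κ i) ℂ) :
    BddBelow ((fun C => (Matrix.trace C).re) '' {C | IsCovering Z C}) :=
  ⟨0, fun x hx => covSet_nonneg x hx⟩

lemma covNorm_zero : covNorm (0 : Matrix (∀ i, κ i) (∀ i, κ i) ℂ) = 0 := by
  refine le_antisymm ?_ (covNorm_nonneg 0)
  have hmem : (0:ℝ) ∈ ((fun C => (Matrix.trace C).re) ''
      {C | IsCovering (0 : Matrix (∀ i, κ i) (∀ i, κ i) ℂ) C}) := by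
    refine ⟨0, ?_, by simp⟩
    refine ⟨tensorPos_zero, ?_, ?_⟩ <;> simpa using tensorPos_zero
  exact csInf_le (covSet_bddBelow 0) hmem

lemma covNorm_neg (Z : Matrix (∀ i, κ i) (∀ i, κ i) ℂ) : covNorm (-Z) = covNorm Z := by
  have hset : {C | IsCovering (-Z) C} = {C | IsCovering Z C} :=
    Set.ext fun C => isCovering_neg_iff
  unfold covNorm
  rw [hset]

lemma covNorm_smul_pos (Z : Matrix (∀ i, κ i) (∀ i, κ i) ℂ) {r : ℝ} (hr : 0 < r) :
    covNorm ((r : ℂ) • Z) = r * covNorm Z := by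
  have hset : ((fun C => (Matrix.trace C).re) '' {C | IsCovering ((r:ℂ) • Z) C}) =
      (fun x => r * x) '' ((fun C => (Matrix.trace C).re) '' {C | IsCovering Z C}) := by
    ext x
    constructor
    · rintro ⟨C, hC, rfl⟩
      refine ⟨(Matrix.trace (((r⁻¹ : ℝ) : ℂ) • C)).re, ⟨((r⁻¹ : ℝ):ℂ) • C, ?_, rfl⟩, ?_⟩
      · have := isCovering_smul (r := r⁻¹) (inv_pos.2 hr) hC
        rwa [smul_smul, ← Complex.ofReal_mul, inv_mul_cancel₀ hr.ne', Complex.ofReal_one,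
          one_smul] at this
      · show r * (Matrix.trace (((r⁻¹ : ℝ) : ℂ) • C)).re = (Matrix.trace C).re
        rw [Matrix.trace_smul, smul_eq_mul, Complex.re_ofReal_mul]
        field_simp
    · rintro ⟨x, ⟨C, hC, rfl⟩, rfl⟩
      refine ⟨(r:ℂ) • C, isCovering_smul hr hC, ?_⟩
      show (Matrix.trace ((r : ℂ) • C)).re = r * (Matrix.trace C).re
      rw [Matrix.trace_smul, smul_eq_mul, Complex.re_ofReal_mul]
  rw [covNorm, hset]
  have himg : (fun x => r * x) '' ((fun C => (Matrix.trace C).re) '' {C | IsCovering Z C}) =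
      r • ((fun C => (Matrix.trace C).re) '' {C | IsCovering Z C}) := by
    ext y
    simp only [Set.mem_image, Set.mem_smul_set, smul_eq_mul]
  rw [himg, Real.sInf_smul_of_nonneg hr.le, smul_eq_mul]
  rfl

end Aux

end LqHV

open LqHV in
/-- The covering norm is a norm on the real vector space of Hermitian matrices on
`ℂ^{k₁} ⊗ ⋯ ⊗ ℂ^{k_m}`: it is nonnegative and vanishes exactly at `0`, it is absolutely
homogeneous for real scalars, and it satisfies the triangle inequality. -/
theorem covNorm_is_norm {m : ℕ} {k : Fin m → ℕ}
    (W W₁ W₂ : Matrix (∀ i, Fin (k i)) (∀ i, Fin (k i)) ℂ)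
    (hW : W.IsHermitian) (hW₁ : W₁.IsHermitian) (hW₂ : W₂.IsHermitian) (α : ℝ) :
    (0 ≤ covNorm W ∧ (covNorm W = 0 ↔ W = 0)) ∧
      covNorm ((α : ℂ) • W) = |α| * covNorm W ∧
      covNorm (W₁ + W₂) ≤ covNorm W₁ + covNorm W₂ := by
  classical
  have hne : ∀ (Z : Matrix (∀ i, Fin (k i)) (∀ i, Fin (k i)) ℂ), Z.IsHermitian →
      ((fun C => (Matrix.trace C).re) '' {C | IsCovering Z C}).Nonempty := by
    intro Z hZ
    obtain ⟨C, hC⟩ := exists_covering hZ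
    exact ⟨(Matrix.trace C).re, C, hC, rfl⟩
  refine ⟨⟨covNorm_nonneg W, ?_, ?_⟩, ?_, ?_⟩
  · -- covNorm W = 0 → W = 0
    intro h0
    ext a b
    have hab : ‖W a b‖ = 0 := by
      by_contra habs
      have hpos : 0 < ‖W a b‖ :=
        lt_of_le_of_ne (norm_nonneg _) (Ne.symm habs)
      have hlt : sInf ((fun C => (Matrix.trace C).re) '' {C | IsCovering W C}) <
          ‖W a b‖ := by
        rw [← covNorm] at *
        rw [h0]
        exact hpos
      obtain ⟨x, ⟨C, hC, rfl⟩, hxlt⟩ :=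
        (csInf_lt_iff (covSet_bddBelow W) (hne W hW)).1 hlt
      exact absurd (entry_bound hC a b) (not_le.2 hxlt)
    simpa using norm_eq_zero.1 hab
  · rintro rfl
    exact covNorm_zero
  · -- homogeneity
    rcases lt_trichotomy α 0 with hα | hα | hα
    · have h1 : ((α:ℝ) : ℂ) • W = -((((-α) : ℝ) : ℂ) • W) := by
        push_cast
        rw [← neg_smul]
        ring_nf
      rw [h1, covNorm_neg, covNorm_smul_pos W (by linarith : (0:ℝ) < -α), abs_of_neg hα]
    · subst hα
      simp [covNorm_zero]
    · rw [covNorm_smul_pos W hα, abs_of_pos hα]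
  · -- triangle inequality
    set S₁ := ((fun C => (Matrix.trace C).re) '' {C | IsCovering W₁ C}) with hS₁
    set S₂ := ((fun C => (Matrix.trace C).re) '' {C | IsCovering W₂ C}) with hS₂
    set S₁₂ := ((fun C => (Matrix.trace C).re) '' {C | IsCovering (W₁ + W₂) C}) with hS₁₂
    have hclaim : ∀ x ∈ S₁, ∀ y ∈ S₂, sInf S₁₂ ≤ x + y := by
      rintro x ⟨C₁, hC₁, rfl⟩ y ⟨C₂, hC₂, rfl⟩
      have hcov : IsCovering (W₁ + W₂) (C₁ + C₂) := by
        refine ⟨tensorPos_add hC₁.1 hC₂.1, ?_, ?_⟩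
        · have : C₁ + C₂ + (W₁ + W₂) = (C₁ + W₁) + (C₂ + W₂) := by abel
          rw [this]
          exact tensorPos_add hC₁.2.1 hC₂.2.1
        · have : C₁ + C₂ - (W₁ + W₂) = (C₁ - W₁) + (C₂ - W₂) := by abel
          rw [this]
          exact tensorPos_add hC₁.2.2 hC₂.2.2
      have hmem : (Matrix.trace C₁).re + (Matrix.trace C₂).re ∈ S₁₂ := by
        refine ⟨C₁ + C₂, hcov, ?_⟩
        show (Matrix.trace (C₁ + C₂)).re = (Matrix.trace C₁).re + (Matrix.trace C₂).re
        rw [Matrix.trace_add, Complex.add_re]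
      exact csInf_le (covSet_bddBelow _) hmem
    have h1 : ∀ y ∈ S₂, sInf S₁₂ - y ≤ sInf S₁ := by
      intro y hy
      refine le_csInf (hne W₁ hW₁) fun x hx => ?_
      have := hclaim x hx y hy
      linarith
    have h2 : sInf S₁₂ - sInf S₁ ≤ sInf S₂ := by
      refine le_csInf (hne W₂ hW₂) fun y hy => ?_
      have := h1 y hy
      linarith
    have : covNorm (W₁ + W₂) = sInf S₁₂ := rfl
    have e1 : covNorm W₁ = sInf S₁ := rfl
    have e2 : covNorm W₂ = sInf S₂ := rfl
    rw [this, e1, e2]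
    linarith
end

section
/- Let an S₁×⋯×S_N-setting correlation scenario admit a normalized finite signed measure μ on Λ₁^{S₁}×⋯×Λ_N^{S_N} returning all of its joint distributions as marginals, and let Ψ = (ψ_{(s₁,…,s_N)}) be a family of bounded measurable real-valued functions on Λ₁×⋯×Λ_N. Then B_inf(Ψ) − ((‖μ‖_var − 1)/2)·(B_sup(Ψ) − B_inf(Ψ)) ≤ Σ_{s₁,…,s_N} ∫ ψ_{(s₁,…,s_N)} dP_{(s₁,…,s_N)} ≤ B_sup(Ψ) + ((‖μ‖_var − 1)/2)·(B_sup(Ψ) − B_inf(Ψ)), where ‖μ‖_var is the total variation norm of μ. -/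
open MeasureTheory

/-- **Analogs of Bell-type inequalities (Eq. (50)).** Let an `S₁ × ⋯ × S_N`-setting correlation
scenario admit a normalized finite signed measure `μ` on `Λ₁^{S₁} × ⋯ × Λ_N^{S_N}` returning
all of its joint distributions as marginals, and let `ψ` be a family of bounded measurable
real-valued functions on `Λ₁ × ⋯ × Λ_N`.  Then, with `V = ‖μ‖_var` the total variation norm
of `μ`, `B_sup`/`B_inf` the LHV constants of the family `ψ`, the sum of the averages
`∑_{s} ∫ ψ_s dP_s` lies between `B_inf − ((V−1)/2)(B_sup−B_inf)` and
`B_sup + ((V−1)/2)(B_sup−B_inf)`. -/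
theorem bell_analog_bounds
    {N : ℕ} (hN : 2 ≤ N) {S : Fin N → ℕ} (hS : ∀ n, 1 ≤ S n)
    {Λ : Fin N → Type} [∀ n, MeasurableSpace (Λ n)]
    (P : (∀ n, Fin (S n)) → Measure (∀ n, Λ n)) [∀ s, IsProbabilityMeasure (P s)]
    (μ : SignedMeasure (∀ n, Fin (S n) → Λ n))
    (hnorm : μ Set.univ = 1)
    (hmarg : ∀ s : ∀ n, Fin (S n),
      μ.map (fun ω n => ω n (s n)) = (P s).toSignedMeasure)
    (ψ : (∀ n, Fin (S n)) → (∀ n, Λ n) → ℝ)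
    (hmeas : ∀ s, Measurable (ψ s))
    (hbdd : ∀ s, ∃ C, ∀ x, |ψ s x| ≤ C) :
    (sInf {x : ℝ | ∃ lam : ∀ n, Fin (S n) → Λ n,
          x = ∑ s : ∀ n, Fin (S n), ψ s (fun n => lam n (s n))}
        - ((μ.totalVariation Set.univ).toReal - 1) / 2 *
          (sSup {x : ℝ | ∃ lam : ∀ n, Fin (S n) → Λ n,
              x = ∑ s : ∀ n, Fin (S n), ψ s (fun n => lam n (s n))}
            - sInf {x : ℝ | ∃ lam : ∀ n, Fin (S n) → Λ n,
              x = ∑ s : ∀ n, Fin (S n), ψ s (fun n => lam n (s n))})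
      ≤ ∑ s : ∀ n, Fin (S n), ∫ x, ψ s x ∂(P s)) ∧
    (∑ s : ∀ n, Fin (S n), ∫ x, ψ s x ∂(P s)
      ≤ sSup {x : ℝ | ∃ lam : ∀ n, Fin (S n) → Λ n,
          x = ∑ s : ∀ n, Fin (S n), ψ s (fun n => lam n (s n))}
        + ((μ.totalVariation Set.univ).toReal - 1) / 2 *
          (sSup {x : ℝ | ∃ lam : ∀ n, Fin (S n) → Λ n,
              x = ∑ s : ∀ n, Fin (S n), ψ s (fun n => lam n (s n))}
            - sInf {x : ℝ | ∃ lam : ∀ n, Fin (S n) → Λ n,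
              x = ∑ s : ∀ n, Fin (S n), ψ s (fun n => lam n (s n))})) := by
  classical
  -- projections
  have hπmeas : ∀ s : ∀ n, Fin (S n),
      Measurable (fun (ω : ∀ n, Fin (S n) → Λ n) (n : Fin N) => ω n (s n)) := fun s =>
    measurable_pi_lambda _ fun n => (measurable_pi_apply (s n)).comp (measurable_pi_apply n)
  choose C hC using hbdd
  set ν₁ := μ.toJordanDecomposition.posPart with hν₁
  set ν₂ := μ.toJordanDecomposition.negPart with hν₂
  have hμapply : ∀ A : Set (∀ n, Fin (S n) → Λ n), MeasurableSet A →
      μ A = (ν₁ A).toReal - (ν₂ A).toReal := by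
    intro A hA
    conv_lhs => rw [← μ.toSignedMeasure_toJordanDecomposition]
    rw [JordanDecomposition.toSignedMeasure, VectorMeasure.sub_apply,
      Measure.toSignedMeasure_apply_measurable hA, Measure.toSignedMeasure_apply_measurable hA]
    rfl
  -- nonemptiness
  have s0 : ∀ n, Fin (S n) := fun n => ⟨0, hS n⟩
  have hne : Nonempty (∀ n, Λ n) := by
    by_contra h
    have hie : IsEmpty (∀ n, Λ n) := not_nonempty_iff.mp h
    have h1 : (P s0) Set.univ = 1 := measure_univ
    rw [Set.univ_eq_empty_iff.mpr hie, measure_empty] at h1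
    exact zero_ne_one h1
  obtain ⟨x0⟩ := hne
  set K : Set ℝ := {x : ℝ | ∃ lam : ∀ n, Fin (S n) → Λ n,
      x = ∑ s : ∀ n, Fin (S n), ψ s (fun n => lam n (s n))} with hK
  set F : (∀ n, Fin (S n) → Λ n) → ℝ :=
    fun ω => ∑ s : ∀ n, Fin (S n), ψ s (fun n => ω n (s n)) with hF
  have hmemK : ∀ lam, F lam ∈ K := fun lam => ⟨lam, rfl⟩
  have hKne : K.Nonempty := ⟨_, hmemK (fun n _ => x0 n)⟩
  have hFbdd : ∀ lam, |F lam| ≤ ∑ s : ∀ n, Fin (S n), C s := by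
    intro lam
    calc |F lam| ≤ ∑ s : ∀ n, Fin (S n), |ψ s (fun n => lam n (s n))| :=
          Finset.abs_sum_le_sum_abs _ _
      _ ≤ ∑ s : ∀ n, Fin (S n), C s := Finset.sum_le_sum fun s _ => hC s _
  have hKbddA : BddAbove K := by
    refine ⟨∑ s : ∀ n, Fin (S n), C s, ?_⟩
    rintro x ⟨lam, rfl⟩
    exact le_trans (le_abs_self _) (hFbdd lam)
  have hKbddB : BddBelow K := by
    refine ⟨-(∑ s : ∀ n, Fin (S n), C s), ?_⟩
    rintro x ⟨lam, rfl⟩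
    exact neg_le_of_abs_le (hFbdd lam)
  have hFle : ∀ lam, F lam ≤ sSup K := fun lam => le_csSup hKbddA (hmemK lam)
  have hFge : ∀ lam, sInf K ≤ F lam := fun lam => csInf_le hKbddB (hmemK lam)
  -- integrability
  have hint : ∀ (s : ∀ n, Fin (S n)) (ν : Measure (∀ n, Fin (S n) → Λ n)) [IsFiniteMeasure ν],
      Integrable (fun ω => ψ s (fun n => ω n (s n))) ν := by
    intro s ν _
    refine (integrable_const (C s)).mono'
      (((hmeas s).comp (hπmeas s)).aestronglyMeasurable) (ae_of_all _ fun ω => ?_)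
    simpa using hC s _
  -- measure equality from marginals
  have hmeasEq : ∀ s : ∀ n, Fin (S n),
      ν₁.map (fun ω n => ω n (s n)) = P s + ν₂.map (fun ω n => ω n (s n)) := by
    intro s
    ext A hA
    have h1 : μ ((fun (ω : ∀ n, Fin (S n) → Λ n) n => ω n (s n)) ⁻¹' A) = ((P s) A).toReal := by
      rw [← VectorMeasure.map_apply μ (hπmeas s) hA, hmarg s,
        Measure.toSignedMeasure_apply_measurable hA]
      rfl
    rw [hμapply _ ((hπmeas s) hA)] at h1
    rw [Measure.map_apply (hπmeas s) hA, Measure.add_apply, Measure.map_apply (hπmeas s) hA]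
    have hfin1 : ν₁ ((fun (ω : ∀ n, Fin (S n) → Λ n) n => ω n (s n)) ⁻¹' A) ≠ ⊤ :=
      measure_ne_top _ _
    have hfin2 : ν₂ ((fun (ω : ∀ n, Fin (S n) → Λ n) n => ω n (s n)) ⁻¹' A) ≠ ⊤ :=
      measure_ne_top _ _
    have hfin3 : (P s) A ≠ ⊤ := measure_ne_top _ _
    refine (ENNReal.toReal_eq_toReal_iff' hfin1 (by
      simp [ENNReal.add_ne_top, hfin2, hfin3])).mp ?_
    rw [ENNReal.toReal_add hfin3 hfin2]
    linarith
  -- per-setting integral identity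
  have hPint : ∀ s : ∀ n, Fin (S n), ∫ x, ψ s x ∂(P s) =
      (∫ ω, ψ s (fun n => ω n (s n)) ∂ν₁) - ∫ ω, ψ s (fun n => ω n (s n)) ∂ν₂ := by
    intro s
    have hmapint : Integrable (ψ s) (ν₂.map (fun ω n => ω n (s n))) := by
      rw [integrable_map_measure (hmeas s).aestronglyMeasurable (hπmeas s).aemeasurable]
      exact hint s ν₂
    have hPsint : Integrable (ψ s) (P s) := by
      refine (integrable_const (C s)).mono' (hmeas s).aestronglyMeasurable
        (ae_of_all _ fun x => ?_)
      simpa using hC s x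
    have e1 : ∫ x, ψ s x ∂(ν₁.map (fun ω n => ω n (s n))) =
        (∫ x, ψ s x ∂(P s)) + ∫ x, ψ s x ∂(ν₂.map (fun ω n => ω n (s n))) := by
      rw [hmeasEq s, integral_add_measure hPsint hmapint]
    rw [integral_map (hπmeas s).aemeasurable (hmeas s).aestronglyMeasurable,
      integral_map (hπmeas s).aemeasurable (hmeas s).aestronglyMeasurable] at e1
    linarith
  -- sum of averages as signed integral of F
  have hsum : ∑ s : ∀ n, Fin (S n), ∫ x, ψ s x ∂(P s) =
      (∫ ω, F ω ∂ν₁) - ∫ ω, F ω ∂ν₂ := by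
    rw [hF, integral_finset_sum _ (fun s _ => hint s ν₁),
      integral_finset_sum _ (fun s _ => hint s ν₂), ← Finset.sum_sub_distrib]
    exact Finset.sum_congr rfl fun s _ => hPint s
  set a := (ν₁ Set.univ).toReal with ha
  set b := (ν₂ Set.univ).toReal with hb
  have hab1 : a - b = 1 := by
    rw [← hμapply Set.univ MeasurableSet.univ, hnorm]
  have hVab : (μ.totalVariation Set.univ).toReal = a + b := by
    rw [SignedMeasure.totalVariation, Measure.add_apply,
      ENNReal.toReal_add (measure_ne_top _ _) (measure_ne_top _ _)]
  have ha0 : 0 ≤ a := ENNReal.toReal_nonneg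
  have hb0 : 0 ≤ b := ENNReal.toReal_nonneg
  have hFint : ∀ (ν : Measure (∀ n, Fin (S n) → Λ n)) [IsFiniteMeasure ν], Integrable F ν := by
    intro ν _
    exact integrable_finset_sum _ fun s _ => hint s ν
  have hub : ∀ (ν : Measure (∀ n, Fin (S n) → Λ n)) [IsFiniteMeasure ν],
      (∫ ω, F ω ∂ν) ≤ (ν Set.univ).toReal * sSup K ∧
      (ν Set.univ).toReal * sInf K ≤ ∫ ω, F ω ∂ν := by
    intro ν _
    constructor
    · calc (∫ ω, F ω ∂ν) ≤ ∫ _, sSup K ∂ν := integral_mono (hFint ν) (integrable_const _) hFle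
        _ = (ν Set.univ).toReal * sSup K := by rw [integral_const, smul_eq_mul]; rfl
    · calc (ν Set.univ).toReal * sInf K = ∫ _, sInf K ∂ν := by rw [integral_const, smul_eq_mul]; rfl
        _ ≤ ∫ ω, F ω ∂ν := integral_mono (integrable_const _) (hFint ν) hFge
  obtain ⟨h1u, h1l⟩ := hub ν₁
  obtain ⟨h2u, h2l⟩ := hub ν₂
  have hkey : b = ((μ.totalVariation Set.univ).toReal - 1) / 2 := by
    rw [hVab]; linarith
  constructor
  · rw [hsum, ← hkey]
    have : a * sInf K - b * sSup K = sInf K - b * (sSup K - sInf K) := by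
      rw [show a = b + 1 by linarith]; ring
    linarith
  · rw [hsum, ← hkey]
    have : a * sSup K - b * sInf K = sSup K + b * (sSup K - sInf K) := by
      rw [show a = b + 1 by linarith]; ring
    linarith
end
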